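/- Let A be a unital k-algebra with a G-action, U ⊆ G a subgroup, and σ: U\G → G a section. Define σ': tensors over A⟨G⟩⋊U → kU ⊗ (A⟨U\G⟩)^{⊗n+1} by σ'(u_{g₀}a₀⟨x₀⟩ ⊗ … ⊗ u_{gₙ}aₙ⟨xₙ⟩) = u_{g₀⋯gₙ} ⊗ (g₁⋯gₙ)⁻¹(a₀⟨σ(x₀)⟩) ⊗ … ⊗ gₙ⁻¹(a_{n-1}⟨σ(x_{n-1})⟩) ⊗ aₙ⟨σ(xₙ)⟩. Then the map Φ: u_g ⊗ ω ↦ u_g·i_*(ω) of Lemma 3.2, with Φ composed with σ', acts as the identity on the classes represented by elements in the image of σ'; i.e. σ' is a section of Φ after passing to the commutator quotient by kU. -/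
import Mathlib


open scoped TensorProduct

section

variable (k : Type*) [Field k] (A : Type*) [Ring A] [Algebra k A]
variable (G : Type*) [Group G]

/-- The diagonal action of `h ∈ G` on `A⟨G⟩ = A ⊗ k⟨G⟩` (modelled as `G →₀ A`),
`h(a⟨γ⟩) = h(a)⟨hγ⟩`, as a `k`-linear map. -/
noncomputable def actAG (ρ : G →* (A ≃ₐ[k] A)) (h : G) : (G →₀ A) →ₗ[k] (G →₀ A) :=
  (Finsupp.lmapDomain A k (fun γ => h * γ)).comp
    (Finsupp.mapRange.linearMap (ρ h).toLinearMap)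

variable (U : Subgroup G) (n : ℕ)

/-- The underlying space of the crossed product `A⟨G⟩⋊U`, modelled as
`U →₀ (G →₀ A)` (i.e. the span of the `u_g·ω`, `g ∈ U`, `ω ∈ A⟨G⟩`). -/
abbrev CrossB := (U →₀ (G →₀ A))

/-- Left multiplication by `u_h` on `A⟨G⟩⋊U`: `u_h·(u_g ω) = u_{hg} ω`. -/
noncomputable def leftMulU (h : U) : CrossB A G U →ₗ[k] CrossB A G U :=
  Finsupp.lmapDomain (G →₀ A) k (fun g => h * g)

/-- Right multiplication by `u_h` on `A⟨G⟩⋊U`: `(u_g ω)·u_h = u_{gh} h⁻¹(ω)`. -/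
noncomputable def rightMulU (ρ : G →* (A ≃ₐ[k] A)) (h : U) :
    CrossB A G U →ₗ[k] CrossB A G U :=
  (Finsupp.lmapDomain (G →₀ A) k (fun g => g * h)).comp
    (Finsupp.mapRange.linearMap (actAG k A G ρ ((h : G))⁻¹))

/-- The `(n+1)`-fold tensor power (over `k`) of `A⟨G⟩⋊U`. -/
abbrev TensB := PiTensorProduct k (fun _ : Fin (n + 1) => CrossB A G U)

noncomputable instance : AddCommGroup (TensB k A G U n) :=
  @PiTensorProduct.instAddCommGroup (Fin (n + 1)) k _ (fun _ => CrossB A G U) _ _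

/-- Apply a linear endomorphism of `A⟨G⟩⋊U` in the `j`-th tensor slot. -/
noncomputable def mapAt (j : Fin (n + 1)) (f : CrossB A G U →ₗ[k] CrossB A G U) :
    TensB k A G U n →ₗ[k] TensB k A G U n :=
  PiTensorProduct.map (Function.update (fun _ => LinearMap.id) j f)

/-- The submodule of relations defining the commutator quotient of the relative
tensor power `(A⟨G⟩⋊U)^{⊗_{kU}(n+1)}` by `kU`: at each junction (cyclically,
including the outer commutator with `kU`) a right multiplication by `u_h` in slot
`j` is identified with the left multiplication by `u_h` in slot `j+1`. -/
noncomputable def relSub (ρ : G →* (A ≃ₐ[k] A)) : Submodule k (TensB k A G U n) :=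
  Submodule.span k {m | ∃ (h : U) (j : Fin (n + 1)) (y : TensB k A G U n),
    m = mapAt k A G U n j (rightMulU k A G U ρ h) y
      - mapAt k A G U n (j + 1) (leftMulU k A G U h) y}

/-- The map `Φ : Vect_k(Ad(U)) ⊗ Ω^n(A⟨G⟩) → Ω^n(A⟨G⟩⋊U : k⋊U)_♮` of Lemma 3.2,
`u_g ⊗ ω₀ ⊗ … ⊗ ωₙ ↦ [u_g·i(ω₀) ⊗ i(ω₁) ⊗ … ⊗ i(ωₙ)]`, where `i : A⟨G⟩ → A⟨G⟩⋊U`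
is the canonical inclusion. -/
noncomputable def PhiMap (ρ : G →* (A ≃ₐ[k] A)) (u : U) (ω : Fin (n + 1) → (G →₀ A)) :
    TensB k A G U n ⧸ relSub k A G U n ρ :=
  Submodule.Quotient.mk (PiTensorProduct.tprod k
    (fun i => if i = 0 then Finsupp.single u (ω i) else Finsupp.single (1 : U) (ω i)))

/-- The generator `u_{g₀}a₀⟨x₀⟩ ⊗ … ⊗ u_{gₙ}aₙ⟨xₙ⟩` of the tensor power of
`A⟨G⟩⋊U`, where the coset `xᵢ ∈ U\\G` labels the basis element `⟨σ(xᵢ)⟩` of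
`k⟨G⟩` via the section `σ`. -/
noncomputable def genT (σ : Quotient (QuotientGroup.rightRel U) → G)
    (g : Fin (n + 1) → U) (x : Fin (n + 1) → Quotient (QuotientGroup.rightRel U))
    (a : Fin (n + 1) → A) : TensB k A G U n :=
  PiTensorProduct.tprod k
    (fun i => Finsupp.single (g i) (Finsupp.single (σ (x i)) (a i)))


lemma actAG_single (ρ : G →* (A ≃ₐ[k] A)) (h s : G) (b : A) :
    actAG k A G ρ h (Finsupp.single s b) = Finsupp.single (h * s) (ρ h b) := by
  simp [actAG, Finsupp.mapDomain_single]

lemma leftMulU_single (h c : U) (v : G →₀ A) :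
    leftMulU k A G U h (Finsupp.single c v) = Finsupp.single (h * c) v := by
  simp [leftMulU, Finsupp.mapDomain_single]

lemma rightMulU_single (ρ : G →* (A ≃ₐ[k] A)) (h c : U) (v : G →₀ A) :
    rightMulU k A G U ρ h (Finsupp.single c v)
      = Finsupp.single (c * h) (actAG k A G ρ ((h : G))⁻¹ v) := by
  simp [rightMulU, Finsupp.mapDomain_single]

lemma mapAt_tprod (j : Fin (n + 1)) (f : CrossB A G U →ₗ[k] CrossB A G U)
    (v : Fin (n + 1) → CrossB A G U) :
    mapAt k A G U n j f (PiTensorProduct.tprod k v)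
      = PiTensorProduct.tprod k (Function.update v j (f (v j))) := by
  rw [mapAt, PiTensorProduct.map_tprod]
  congr 1
  funext i
  rcases eq_or_ne i j with rfl | hij
  · simp
  · simp [Function.update_of_ne hij]

/-- Intermediate states: the group elements in slots `≥ t` have been pushed
(leftwards, with the induced twist) into slot `t`. -/
noncomputable def auxS (ρ : G →* (A ≃ₐ[k] A))
    (σ : Quotient (QuotientGroup.rightRel U) → G)
    (g : Fin (n + 1) → U) (x : Fin (n + 1) → Quotient (QuotientGroup.rightRel U))
    (a : Fin (n + 1) → A) (t : ℕ) : TensB k A G U n :=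
  PiTensorProduct.tprod k (fun i =>
    if (i : ℕ) < t then Finsupp.single (g i) (Finsupp.single (σ (x i)) (a i))
    else if (i : ℕ) = t then
      Finsupp.single (((List.ofFn g).drop t).prod)
        (actAG k A G ρ (((((List.ofFn g).drop (t + 1)).prod : U) : G))⁻¹
          (Finsupp.single (σ (x i)) (a i)))
    else
      Finsupp.single (1 : U)
        (actAG k A G ρ (((((List.ofFn g).drop ((i : ℕ) + 1)).prod : U) : G))⁻¹
          (Finsupp.single (σ (x i)) (a i))))

lemma drop_prod_succ (g : Fin (n + 1) → U) (t : ℕ) (ht : t < n + 1) :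
    ((List.ofFn g).drop t).prod = g ⟨t, ht⟩ * ((List.ofFn g).drop (t + 1)).prod := by
  have hlen : t < (List.ofFn g).length := by simpa using ht
  rw [List.drop_eq_getElem_cons hlen, List.prod_cons, List.getElem_ofFn]

set_option maxHeartbeats 1000000 in
lemma auxS_step (ρ : G →* (A ≃ₐ[k] A))
    (σ : Quotient (QuotientGroup.rightRel U) → G)
    (g : Fin (n + 1) → U) (x : Fin (n + 1) → Quotient (QuotientGroup.rightRel U))
    (a : Fin (n + 1) → A) (t : ℕ) (ht : t < n) :
    (Submodule.Quotient.mk (auxS k A G U n ρ σ g x a t) :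
        TensB k A G U n ⧸ relSub k A G U n ρ)
      = Submodule.Quotient.mk (auxS k A G U n ρ σ g x a (t + 1)) := by
  set v : Fin (n + 1) → CrossB A G U := fun i =>
    if (i : ℕ) < t + 1 then Finsupp.single (g i) (Finsupp.single (σ (x i)) (a i))
    else Finsupp.single (1 : U)
      (actAG k A G ρ (((((List.ofFn g).drop ((i : ℕ) + 1)).prod : U) : G))⁻¹
        (Finsupp.single (σ (x i)) (a i))) with hv
  have hidx : (⟨t, by omega⟩ : Fin (n + 1)) + 1 = (⟨t + 1, by omega⟩ : Fin (n + 1)) := by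
    apply Fin.ext
    rw [Fin.val_add_one_of_lt (by simp [Fin.lt_def]; omega)]
  have e1 : auxS k A G U n ρ σ g x a t
      = mapAt k A G U n ⟨t, by omega⟩
          (rightMulU k A G U ρ (((List.ofFn g).drop (t + 1)).prod))
          (PiTensorProduct.tprod k v) := by
    rw [mapAt_tprod, auxS]
    congr 1
    funext i
    rcases eq_or_ne i ⟨t, by omega⟩ with rfl | hij
    · rw [Function.update_self]
      have hvt : v ⟨t, by omega⟩
          = Finsupp.single (g ⟨t, by omega⟩)
              (Finsupp.single (σ (x ⟨t, by omega⟩)) (a ⟨t, by omega⟩)) := by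
        simp [hv]
      rw [hvt, rightMulU_single,
        drop_prod_succ (G := G) (U := U) (n := n) g t (by omega)]
      simp
    · rw [Function.update_of_ne hij]
      have hne : (i : ℕ) ≠ t := fun hc => hij (Fin.ext hc)
      simp only [hv]
      split_ifs <;> first | rfl | omega
  have e2 : auxS k A G U n ρ σ g x a (t + 1)
      = mapAt k A G U n ⟨t + 1, by omega⟩
          (leftMulU k A G U (((List.ofFn g).drop (t + 1)).prod))
          (PiTensorProduct.tprod k v) := by
    rw [mapAt_tprod, auxS]
    congr 1
    funext i
    rcases eq_or_ne i ⟨t + 1, by omega⟩ with rfl | hij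
    · rw [Function.update_self]
      have hvt : v ⟨t + 1, by omega⟩
          = Finsupp.single (1 : U)
              (actAG k A G ρ (((((List.ofFn g).drop (t + 1 + 1)).prod : U) : G))⁻¹
                (Finsupp.single (σ (x ⟨t + 1, by omega⟩)) (a ⟨t + 1, by omega⟩))) := by
        simp [hv]
      rw [hvt, leftMulU_single, mul_one]
      simp
    · rw [Function.update_of_ne hij]
      have hne : (i : ℕ) ≠ t + 1 := fun hc => hij (Fin.ext hc)
      simp only [hv]
      split_ifs <;> first | rfl | omega
  rw [Submodule.Quotient.eq]
  exact Submodule.subset_span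
    ⟨((List.ofFn g).drop (t + 1)).prod, ⟨t, by omega⟩, PiTensorProduct.tprod k v,
      by rw [← e1, hidx, ← e2]⟩

lemma auxS_chain (ρ : G →* (A ≃ₐ[k] A))
    (σ : Quotient (QuotientGroup.rightRel U) → G)
    (g : Fin (n + 1) → U) (x : Fin (n + 1) → Quotient (QuotientGroup.rightRel U))
    (a : Fin (n + 1) → A) :
    ∀ j, j ≤ n →
    (Submodule.Quotient.mk (auxS k A G U n ρ σ g x a (n - j)) :
        TensB k A G U n ⧸ relSub k A G U n ρ)
      = Submodule.Quotient.mk (auxS k A G U n ρ σ g x a n) := by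
  intro j
  induction j with
  | zero => simp
  | succ m ih =>
    intro hm
    have h1 := auxS_step k A G U n ρ σ g x a (n - (m + 1)) (by omega)
    rw [h1]
    have h2 : n - (m + 1) + 1 = n - m := by omega
    rw [h2]
    exact ih (by omega)

set_option maxHeartbeats 1000000 in
/-- the map `σ'` of Lemma 3.2,
`σ'(u_{g₀}a₀⟨x₀⟩ ⊗ … ⊗ u_{gₙ}aₙ⟨xₙ⟩)
  = u_{g₀⋯gₙ} ⊗ (g₁⋯gₙ)⁻¹(a₀⟨σ(x₀)⟩) ⊗ … ⊗ gₙ⁻¹(a_{n-1}⟨σ(x_{n-1})⟩) ⊗ aₙ⟨σ(xₙ)⟩`,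
is a section of `Φ` after passing to the commutator quotient by `kU`: composing
`σ'` with `Φ` is the identity on the class of each generator. -/
theorem stmt14 (ρ : G →* (A ≃ₐ[k] A))
    (σ : Quotient (QuotientGroup.rightRel U) → G)
    (hσ : ∀ x : Quotient (QuotientGroup.rightRel U), Quotient.mk'' (σ x) = x) :
    ∀ (g : Fin (n + 1) → U) (x : Fin (n + 1) → Quotient (QuotientGroup.rightRel U))
      (a : Fin (n + 1) → A),
      PhiMap k A G U n ρ ((List.ofFn g).prod)
        (fun i => actAG k A G ρ
          (((((List.ofFn g).drop ((i : ℕ) + 1)).prod : U) : G))⁻¹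
          (Finsupp.single (σ (x i)) (a i)))
        = Submodule.Quotient.mk (genT k A G U n σ g x a) := by
  intro g x a
  have h0 : PhiMap k A G U n ρ ((List.ofFn g).prod)
        (fun i => actAG k A G ρ
          (((((List.ofFn g).drop ((i : ℕ) + 1)).prod : U) : G))⁻¹
          (Finsupp.single (σ (x i)) (a i)))
      = Submodule.Quotient.mk (auxS k A G U n ρ σ g x a 0) := by
    rw [PhiMap, auxS]
    congr 2
    funext i
    rcases eq_or_ne i 0 with rfl | hi
    · rw [if_pos rfl]
      simp
    · rw [if_neg hi]
      have hne : (i : ℕ) ≠ 0 := by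
        intro hc; exact hi (by exact Fin.ext hc)
      rw [if_neg (by omega), if_neg hne]
  have hn : (Submodule.Quotient.mk (auxS k A G U n ρ σ g x a n) :
        TensB k A G U n ⧸ relSub k A G U n ρ)
      = Submodule.Quotient.mk (genT k A G U n σ g x a) := by
    rw [auxS, genT]
    congr 2
    funext i
    have hi : (i : ℕ) < n ∨ (i : ℕ) = n := by omega
    rcases hi with hi | hi
    · rw [if_pos hi]
    · rw [if_neg (by omega), if_pos hi]
      have hnil : (List.ofFn g).drop (n + 1) = [] :=
        List.drop_eq_nil_of_le (by simp)
      have hgn : ((List.ofFn g).drop n).prod = g i := by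
        rw [drop_prod_succ (G := G) (U := U) (n := n) g n (by omega), hnil,
          List.prod_nil, mul_one]
        exact congrArg g (Fin.ext hi.symm)
      rw [hnil, hgn]
      simp [actAG_single]
  have hchain := auxS_chain k A G U n ρ σ g x a n le_rfl
  rw [Nat.sub_self] at hchain
  rw [h0, hchain, hn]

end
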